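/- Let P and Q be k×k projection matrices and let Φ ∈ ℂ[z₀, z₁, z₂] be their characteristic polynomial, Φ(z) = det(z₀I + z₁P + z₂Q). Then Φ is a product of polynomials each of which is either a homogeneous linear polynomial or an irreducible homogeneous quadratic polynomial in z₀, z₁, z₂. -/

import Mathlib

noncomputable def Tmap (σ R : Type*) [CommRing R] :
    MvPolynomial σ R →ₐ[R] Polynomial (MvPolynomial σ R) :=
  MvPolynomial.aeval (fun i => Polynomial.C (MvPolynomial.X i) * Polynomial.X)

open MvPolynomial in
theorem Tmap_monomial {σ R : Type*} [CommRing R] (d : σ →₀ ℕ) (r : R) :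
    Tmap σ R (monomial d r) =
      Polynomial.C (monomial d r) * Polynomial.X ^ (d.degree) := by
  simp only [Tmap, aeval_monomial]
  rw [Finsupp.prod_congr (g2 := fun i n => Polynomial.C (X i ^ n) * Polynomial.X ^ n)
    (fun i _ => by simp [mul_pow, map_pow])]
  rw [Finsupp.prod_mul, ← map_finsuppProd]
  rw [show (d.prod fun i n => (Polynomial.X : Polynomial (MvPolynomial σ R)) ^ n)
      = Polynomial.X ^ d.degree from by
    rw [Finsupp.prod, Finset.prod_pow_eq_pow_sum, Finsupp.degree]; rfl]
  rw [monomial_eq, map_mul, ← mul_assoc]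
  congr 1

open MvPolynomial in
theorem Tmap_coeff {σ R : Type*} [CommRing R] (p : MvPolynomial σ R) (j : ℕ) :
    (Tmap σ R p).coeff j = homogeneousComponent j p := by
  classical
  conv_lhs => rw [p.as_sum]
  rw [map_sum, Polynomial.finset_sum_coeff]
  rw [show (homogeneousComponent j p : MvPolynomial σ R)
      = ∑ d ∈ p.support, if d.degree = j then monomial d (coeff d p) else 0 from ?_]
  · refine Finset.sum_congr rfl fun d _ => ?_
    rw [Tmap_monomial, Polynomial.coeff_C_mul, Polynomial.coeff_X_pow]
    split_ifs with h1 h2 <;> simp_all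
  · ext e
    rw [coeff_homogeneousComponent]
    rw [coeff_sum]
    simp only [coeff_monomial, apply_ite (coeff e), coeff_zero]
    rw [Finset.sum_congr rfl (fun x _ => show _ =
      if x = e then (if e.degree = j then coeff e p else 0) else 0 from by
        split_ifs <;> simp_all)]
    rw [Finset.sum_ite_eq' p.support e]
    split_ifs with he <;> simp_all [MvPolynomial.notMem_support_iff]

open MvPolynomial in
theorem Tmap_isHomogeneous {σ R : Type*} [CommRing R] {p : MvPolynomial σ R} {n : ℕ}
    (hp : p.IsHomogeneous n) :
    Tmap σ R p = Polynomial.C p * Polynomial.X ^ n := by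
  ext j
  rw [Tmap_coeff, Polynomial.coeff_C_mul, Polynomial.coeff_X_pow,
    homogeneousComponent_of_mem ((mem_homogeneousSubmodule n p).mpr hp)]
  split_ifs with h1 h2 h2 <;> simp_all

open MvPolynomial in
theorem Tmap_ne_zero {σ R : Type*} [CommRing R] {p : MvPolynomial σ R}
    (hp : p ≠ 0) : Tmap σ R p ≠ 0 := by
  intro h
  apply hp
  rw [← sum_homogeneousComponent p]
  refine Finset.sum_eq_zero fun i _ => ?_
  rw [← Tmap_coeff, h, Polynomial.coeff_zero]

open MvPolynomial in
theorem isHomogeneous_of_dvd_homogeneous {σ R : Type*} [CommRing R] [IsDomain R]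
    {f g r : MvPolynomial σ R} {n : ℕ} (h : f * g = r) (hr : r.IsHomogeneous n)
    (hf : f ≠ 0) (hg : g ≠ 0) : ∃ m, f.IsHomogeneous m := by
  set u := Tmap σ R f with hu'
  set v := Tmap σ R g with hv'
  have hu : u ≠ 0 := Tmap_ne_zero hf
  have hv : v ≠ 0 := Tmap_ne_zero hg
  have hr0 : r ≠ 0 := h ▸ mul_ne_zero hf hg
  have huv : u * v = Polynomial.C r * Polynomial.X ^ n := by
    rw [hu', hv', ← map_mul, h, Tmap_isHomogeneous hr]
  have hdeg : u.natDegree + v.natDegree = n := by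
    rw [← Polynomial.natDegree_mul hu hv, huv, Polynomial.natDegree_C_mul_X_pow n r hr0]
  have htr : u.natTrailingDegree + v.natTrailingDegree = n := by
    rw [← Polynomial.natTrailingDegree_mul hu hv, huv,
      Polynomial.C_mul_X_pow_eq_monomial, Polynomial.natTrailingDegree_monomial hr0]
  have h1 := u.natTrailingDegree_le_natDegree
  have h2 := v.natTrailingDegree_le_natDegree
  have key : u.natTrailingDegree = u.natDegree := by omega
  refine ⟨u.natDegree, ?_⟩
  have hfm : f = homogeneousComponent u.natDegree f := by
    ext d
    rw [coeff_homogeneousComponent]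
    split_ifs with hd
    · rfl
    · by_contra hcd
      have hcu : u.coeff d.degree ≠ 0 := by
        rw [hu', Tmap_coeff]
        intro h0
        apply hcd
        have h3 := coeff_homogeneousComponent (n := d.degree) (φ := f) d
        rw [h0] at h3
        simpa using h3.symm
      have := Polynomial.le_natDegree_of_ne_zero hcu
      have := Polynomial.natTrailingDegree_le_of_ne_zero hcu
      omega
  rw [hfm]
  exact homogeneousComponent_isHomogeneous _ _

open MvPolynomial in
theorem eq_C_of_isHomogeneous_zero {σ R : Type*} [CommRing R] {p : MvPolynomial σ R}
    (h : p.IsHomogeneous 0) : p = MvPolynomial.C (coeff 0 p) := by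
  have ht : p.totalDegree = 0 := Nat.le_zero.mp h.totalDegree_le
  conv_lhs => rw [← sum_homogeneousComponent p, ht]
  simp [homogeneousComponent_zero]

set_option maxHeartbeats 1000000 in
open MvPolynomial in
/-- The characteristic polynomial Φ(z) = det(z₀I + z₁P + z₂Q) of two projections is a
product of homogeneous linear and/or irreducible homogeneous quadratic polynomials. -/
theorem stmt_12 {k : ℕ} (P Q : Matrix (Fin k) (Fin k) ℂ)
    (hP : P.IsHermitian) (hP' : P * P = P)
    (hQ : Q.IsHermitian) (hQ' : Q * Q = Q)
    (Φ : MvPolynomial (Fin 3) ℂ)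
    (hΦ : Φ = Matrix.det
        ((MvPolynomial.X 0 : MvPolynomial (Fin 3) ℂ) •
            (1 : Matrix (Fin k) (Fin k) (MvPolynomial (Fin 3) ℂ)) +
          (MvPolynomial.X 1 : MvPolynomial (Fin 3) ℂ) • P.map MvPolynomial.C +
          (MvPolynomial.X 2 : MvPolynomial (Fin 3) ℂ) • Q.map MvPolynomial.C)) :
    ∃ l : Multiset (MvPolynomial (Fin 3) ℂ),
      Φ = l.prod ∧
      ∀ f ∈ l, f.IsHomogeneous 1 ∨ (f.IsHomogeneous 2 ∧ Irreducible f) := by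
  classical
  -- trivial case k = 0
  rcases Nat.eq_zero_or_pos k with hk | hk
  · subst hk
    refine ⟨0, ?_, by simp⟩
    rw [hΦ, Matrix.det_isEmpty, Multiset.prod_zero]
  set a : (MvPolynomial (Fin 3) ℂ) := X 0 with ha
  set b : (MvPolynomial (Fin 3) ℂ) := X 1 with hb
  set c : (MvPolynomial (Fin 3) ℂ) := X 2 with hc
  set P' : Matrix (Fin k) (Fin k) (MvPolynomial (Fin 3) ℂ) := P.map C with hP'd
  set Q' : Matrix (Fin k) (Fin k) (MvPolynomial (Fin 3) ℂ) := Q.map C with hQ'd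
  set D' : Matrix (Fin k) (Fin k) (MvPolynomial (Fin 3) ℂ) := ((P - Q) * (P - Q)).map C with hD'd
  have hPP : P' * P' = P' := by rw [hP'd, ← Matrix.map_mul, hP']
  have hQQ : Q' * Q' = Q' := by rw [hQ'd, ← Matrix.map_mul, hQ']
  have hD : D' = P' + Q' - P' * Q' - Q' * P' := by
    have h0 : (P - Q) * (P - Q) = P + Q - P * Q - Q * P := by
      rw [sub_mul, mul_sub, mul_sub, hP', hQ']
      abel
    rw [hD'd, h0]
    simp only [hP'd, hQ'd, ← RingHom.mapMatrix_apply (f := (MvPolynomial.C : ℂ →+* (MvPolynomial (Fin 3) ℂ))),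
      map_sub, map_add, map_mul]
  set e : (MvPolynomial (Fin 3) ℂ) := -(a * (a + b + c)) with he
  set f : (MvPolynomial (Fin 3) ℂ) := -(b * c) with hf
  set M : Matrix (Fin k) (Fin k) (MvPolynomial (Fin 3) ℂ) := a • 1 + b • P' + c • Q' with hM
  set N : Matrix (Fin k) (Fin k) (MvPolynomial (Fin 3) ℂ) := (-a - b - c) • 1 + b • P' + c • Q' with hN
  have key : M * N = e • (1 : Matrix (Fin k) (Fin k) (MvPolynomial (Fin 3) ℂ)) + f • D' := by
    rw [hM, hN, hD, he, hf]
    simp only [Matrix.add_mul, Matrix.mul_add, Matrix.smul_mul, Matrix.mul_smul,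
      smul_smul, Matrix.mul_one, Matrix.one_mul, hPP, hQQ, smul_sub, smul_add]
    module
  -- spectral theorem for D = (P-Q)²
  have hDh : ((P - Q) * (P - Q)).IsHermitian := by
    have h1 : (P - Q).IsHermitian := hP.sub hQ
    unfold Matrix.IsHermitian
    rw [Matrix.conjTranspose_mul, h1]
  set U : Matrix (Fin k) (Fin k) ℂ :=
    (Matrix.IsHermitian.eigenvectorUnitary hDh : Matrix (Fin k) (Fin k) ℂ) with hU
  set ev : Fin k → ℝ := hDh.eigenvalues with hev
  have hspec := hDh.spectral_theorem
  set U' : Matrix (Fin k) (Fin k) (MvPolynomial (Fin 3) ℂ) := U.map C with hU'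
  set V' : Matrix (Fin k) (Fin k) (MvPolynomial (Fin 3) ℂ) := (star U).map C with hV'
  have hUV : U' * V' = 1 := by
    simp only [hU', hV', ← RingHom.mapMatrix_apply (f := (MvPolynomial.C : ℂ →+* (MvPolynomial (Fin 3) ℂ))),
      ← map_mul]
    rw [Unitary.mul_star_self_of_mem (Matrix.IsHermitian.eigenvectorUnitary hDh).2]
    simp
    exact Matrix.map_one _ (map_zero _) (map_one _)
  set W : Matrix (Fin k) (Fin k) (MvPolynomial (Fin 3) ℂ) :=
    Matrix.diagonal (fun i => e + f * C ((ev i : ℝ) : ℂ)) with hWdef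
  have hdiagmap : (Matrix.diagonal (RCLike.ofReal ∘ hDh.eigenvalues) :
      Matrix (Fin k) (Fin k) ℂ).map MvPolynomial.C
      = Matrix.diagonal (fun i => (C ((ev i : ℝ) : ℂ) : (MvPolynomial (Fin 3) ℂ))) := by
    rw [Matrix.diagonal_map (map_zero _)]
    rfl
  have hD'2 : D' = U' * (Matrix.diagonal (fun i => (C ((ev i : ℝ) : ℂ) : (MvPolynomial (Fin 3) ℂ)))) * V' := by
    rw [hD'd]
    conv_lhs => rw [hspec, Unitary.conjStarAlgAut_apply]
    rw [Matrix.map_mul, Matrix.map_mul, hdiagmap]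
  have hWd : W = e • (1 : Matrix (Fin k) (Fin k) (MvPolynomial (Fin 3) ℂ))
      + f • Matrix.diagonal (fun i => (C ((ev i : ℝ) : ℂ) : (MvPolynomial (Fin 3) ℂ))) := by
    ext i j
    rcases eq_or_ne i j with hij | hij
    · subst hij
      simp only [hWdef, Matrix.diagonal_apply_eq, Matrix.add_apply, Matrix.smul_apply,
        Matrix.one_apply_eq, smul_eq_mul, mul_one]
    · simp only [hWdef, Matrix.diagonal_apply_ne _ hij, Matrix.add_apply, Matrix.smul_apply,
        Matrix.one_apply_ne hij, smul_eq_mul, mul_zero, add_zero]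
  have hW : e • (1 : Matrix (Fin k) (Fin k) (MvPolynomial (Fin 3) ℂ)) + f • D' = U' * W * V' := by
    rw [hD'2, hWd]
    simp only [Matrix.mul_add, Matrix.mul_smul, Matrix.mul_one, Matrix.add_mul,
      Matrix.smul_mul, hUV]
  -- the product identity
  set r : Fin k → (MvPolynomial (Fin 3) ℂ) := fun i => e + f * C ((ev i : ℝ) : ℂ) with hr
  have hdet : Φ * N.det = ∏ i : Fin k, r i := by
    rw [hΦ, ← Matrix.det_mul, key, hW]
    rw [Matrix.det_mul, Matrix.det_mul]
    have : U'.det * W.det * V'.det = W.det * (U' * V').det := by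
      rw [Matrix.det_mul]; ring
    rw [this, hUV, Matrix.det_one, mul_one, hWdef, Matrix.det_diagonal]
  -- the quadratics r i are homogeneous of degree 2 and nonzero
  set x₁ : Fin 3 → ℂ := ![1, 0, 0] with hx₁
  have hrne : ∀ i, r i ≠ 0 := by
    intro i h0
    have h1 : MvPolynomial.eval x₁ (r i) = -1 := by
      simp only [hr, he, hf, ha, hb, hc, map_neg, map_mul, map_add, eval_X, eval_C, hx₁]
      norm_num
      rfl
    rw [h0, map_zero] at h1
    norm_num at h1
  have hr2 : ∀ i, (r i).IsHomogeneous 2 := by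
    intro i
    rw [hr, he, hf, ha, hb, hc]
    have h1 : ((X 0 : (MvPolynomial (Fin 3) ℂ)) * (X 0 + X 1 + X 2)).IsHomogeneous 2 :=
      (isHomogeneous_X ℂ 0).mul (((isHomogeneous_X ℂ 0).add (isHomogeneous_X ℂ 1)).add
        (isHomogeneous_X ℂ 2))
    have h2 : ((X 1 : (MvPolynomial (Fin 3) ℂ)) * X 2 * C ((ev i : ℝ) : ℂ)).IsHomogeneous 2 := by
      have := (((isHomogeneous_X ℂ 1).mul (isHomogeneous_X ℂ 2)).mul
        (isHomogeneous_C (Fin 3) ((ev i : ℝ) : ℂ)))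
      simpa using this
    have := h1.neg.add (by simpa [neg_mul] using h2.neg)
    simpa [neg_mul] using this
  have hΦ0 : Φ ≠ 0 := by
    intro h0
    have := hdet
    rw [h0, zero_mul] at this
    exact (Finset.prod_ne_zero_iff.mpr fun i _ => hrne i) this.symm
  -- factor Φ into primes
  obtain ⟨m, hmp, hma⟩ := UniqueFactorizationMonoid.exists_prime_factors Φ hΦ0
  obtain ⟨u, hu⟩ := hma
  by_cases hm0 : m = 0
  · -- Φ would be a unit: contradiction with k ≥ 1
    exfalso
    have hunit : IsUnit Φ := by
      rw [← hu, hm0, Multiset.prod_zero, one_mul]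
      exact u.isUnit
    have hTunit : IsUnit (Tmap (Fin 3) ℂ Φ) := hunit.map (Tmap (Fin 3) ℂ)
    have hnd : (Tmap (Fin 3) ℂ Φ).natDegree = 0 :=
      Polynomial.natDegree_eq_zero_of_isUnit hTunit
    have h0 : ∀ j, j ≠ 0 → homogeneousComponent j Φ = 0 := by
      intro j hj
      rw [← Tmap_coeff]
      exact Polynomial.coeff_eq_zero_of_natDegree_lt (by omega)
    have hΦC : Φ = MvPolynomial.C (coeff 0 Φ) := by
      have : Φ = homogeneousComponent 0 Φ := by
        conv_lhs => rw [← sum_homogeneousComponent Φ]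
        exact Finset.sum_eq_single_of_mem 0 (Finset.mem_range.mpr (Nat.succ_pos _))
          (fun i _ hi => h0 i hi)
      rw [this, homogeneousComponent_zero]
      simp
    have hev1 : MvPolynomial.eval x₁ Φ = 1 := by
      rw [hΦ, RingHom.map_det]
      have hmap : M.map (MvPolynomial.eval x₁) = (1 : Matrix (Fin k) (Fin k) ℂ) := by
        rw [hM]
        ext i j
        by_cases hij : i = j <;>
          simp [hP'd, hQ'd, ha, hb, hc, Matrix.map_apply, Matrix.add_apply,
            Matrix.smul_apply, Matrix.one_apply, hij, hx₁]
      rw [RingHom.mapMatrix_apply, hmap, Matrix.det_one]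
    have hev0 : MvPolynomial.eval (fun _ => 0) Φ = 0 := by
      rw [hΦ, RingHom.map_det]
      have hmap : M.map (MvPolynomial.eval (fun _ => (0:ℂ)))
          = (0 : Matrix (Fin k) (Fin k) ℂ) := by
        rw [hM]
        ext i j
        simp [hP'd, hQ'd, ha, hb, hc, Matrix.map_apply, Matrix.add_apply, Matrix.smul_apply]
      rw [RingHom.mapMatrix_apply, hmap]
      exact (have : Nonempty (Fin k) := ⟨⟨0, hk⟩⟩; Matrix.det_zero)
    rw [hΦC] at hev1 hev0
    simp at hev1 hev0
    rw [hev0] at hev1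
    exact one_ne_zero hev1.symm
  · obtain ⟨f₀, hf₀⟩ := Multiset.exists_mem_of_ne_zero hm0
    obtain ⟨m', rfl⟩ := Multiset.exists_cons_of_mem hf₀
    have hlp : (((u : MvPolynomial (Fin 3) ℂ) * f₀) ::ₘ m').prod = Φ := by
      rw [Multiset.prod_cons, ← hu, Multiset.prod_cons]
      ring
    refine ⟨((u : MvPolynomial (Fin 3) ℂ) * f₀) ::ₘ m', hlp.symm, ?_⟩
    intro g hg
    have hgprime : Prime g := by
      rcases Multiset.mem_cons.mp hg with h | h
      · subst h
        exact (Associated.prime ⟨u, mul_comm f₀ (u : MvPolynomial (Fin 3) ℂ)⟩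
          (hmp f₀ (Multiset.mem_cons_self _ _)))
      · exact hmp g (Multiset.mem_cons_of_mem h)
    have hdvd : g ∣ Φ := hlp ▸ Multiset.dvd_prod hg
    have hdvdr : g ∣ ∏ i : Fin k, r i := hdet ▸ hdvd.mul_right N.det
    obtain ⟨i, -, hgi⟩ := hgprime.exists_mem_finset_dvd hdvdr
    obtain ⟨t, ht⟩ := hgi
    have hg0 : g ≠ 0 := hgprime.ne_zero
    have ht0 : t ≠ 0 := by
      rintro rfl
      rw [mul_zero] at ht
      exact hrne i ht
    obtain ⟨mg, hmg⟩ := isHomogeneous_of_dvd_homogeneous ht.symm (hr2 i) hg0 ht0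
    obtain ⟨mt, hmt⟩ := isHomogeneous_of_dvd_homogeneous
      (by rw [mul_comm]; exact ht.symm) (hr2 i) ht0 hg0
    have hsum : mg + mt = 2 := by
      have h2 : (r i).IsHomogeneous (mg + mt) := by
        rw [ht]
        exact hmg.mul hmt
      exact h2.inj_right (hr2 i) (hrne i)
    have hmgne : mg ≠ 0 := by
      rintro rfl
      have hgC : g = C (coeff 0 g) := eq_C_of_isHomogeneous_zero hmg
      have hc0 : coeff 0 g ≠ 0 := by
        intro h
        rw [h, map_zero] at hgC
        exact hg0 hgC
      exact hgprime.not_unit (hgC ▸ (isUnit_iff_ne_zero.mpr hc0).map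
        (MvPolynomial.C : ℂ →+* MvPolynomial (Fin 3) ℂ))
    have : mg = 1 ∨ mg = 2 := by omega
    rcases this with h1 | h2
    · exact Or.inl (h1 ▸ hmg)
    · exact Or.inr ⟨h2 ▸ hmg, hgprime.irreducible⟩
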